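/- Stars are anti-common: for every m ≥ 2 and every r ≥ m−1, lim_{n→∞} rbC_r(K_{1,m−1};n) = (C(r,m−1)·(m−1)!)/r^{m−1}. -/

import Mathlib

open Filter Topology

/-- A copy of `H` (given by an injection `f`) in `K_n` is rainbow under the
edge-coloring `c` if all edges of the copy receive distinct colors. -/
def IsRainbow {m n r : ℕ} (H : SimpleGraph (Fin m)) (c : Sym2 (Fin n) → Fin r)
    (f : Fin m ↪ Fin n) : Prop :=
  ∀ e₁ ∈ H.edgeSet, ∀ e₂ ∈ H.edgeSet, e₁ ≠ e₂ → c (e₁.map ⇑f) ≠ c (e₂.map ⇑f)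

/-- Number of (labeled) rainbow copies of `H` in `K_n` under the coloring `c`. -/
noncomputable def rainbowCount {m n r : ℕ} (H : SimpleGraph (Fin m))
    (c : Sym2 (Fin n) → Fin r) : ℕ :=
  Nat.card {f : Fin m ↪ Fin n // IsRainbow H c f}

/-- `rbL H n r`: the maximum number of labeled rainbow copies of `H` over all
`r`-edge-colorings of `K_n`.  (The labeled count is `|Aut H|` times the number
of rainbow copies `rb_r(H;n)` of the paper.) -/
noncomputable def rbL {m : ℕ} (H : SimpleGraph (Fin m)) (n r : ℕ) : ℕ :=
  sSup (Set.range fun c : Sym2 (Fin n) → Fin r => rainbowCount H c)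

/-- The number of automorphisms of `H`. -/
noncomputable def autCard {m : ℕ} (H : SimpleGraph (Fin m)) : ℕ :=
  Nat.card (H ≃g H)

/-- `rbC H n r`: the maximum proportion of copies of `H` in `K_n` which are rainbow,
i.e. `rb_r(H;n) / (C(n,m)·m!/|Aut(H)|) = rbL H n r / (C(n,m)·m!)`. -/
noncomputable def rbC {m : ℕ} (H : SimpleGraph (Fin m)) (n r : ℕ) : ℝ :=
  (rbL H n r : ℝ) / ((n.choose m) * (m.factorial))

/-- The star `K_{1,m-1}` on `m` vertices, with center the vertex `0`. -/
def starG (m : ℕ) : SimpleGraph (Fin m) where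
  Adj a b := (a.val = 0 ∨ b.val = 0) ∧ a ≠ b
  symm := by
    constructor
    intro a b h
    exact ⟨h.1.symm, h.2.symm⟩
  loopless := by
    constructor
    intro a h
    exact h.2 rfl

section AuxStmt7
open Finset

lemma amgm_pow (a b : ℝ) (ha : 0 ≤ a) (hb : 0 ≤ b) (k : ℕ) (hk : 1 ≤ k) :
    a ^ (k - 1) * b * (k : ℝ) ^ k ≤ (((k : ℝ) - 1) * a + b) ^ k := by
  have hk0 : (0:ℝ) < (k:ℝ) := by exact_mod_cast hk
  have hw1 : (0:ℝ) ≤ ((k:ℝ) - 1) / k := by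
    apply div_nonneg _ hk0.le
    have : (1:ℝ) ≤ (k:ℝ) := by exact_mod_cast hk
    linarith
  have hw2 : (0:ℝ) ≤ 1 / (k:ℝ) := by positivity
  have hsum : ((k:ℝ) - 1) / k + 1 / k = 1 := by field_simp; ring
  have H := Real.geom_mean_le_arith_mean2_weighted hw1 hw2 ha hb hsum
  have hL : (a ^ (((k:ℝ) - 1) / k) * b ^ ((1:ℝ) / k)) ^ (k:ℕ)
      = a ^ (k - 1) * b := by
    rw [mul_pow, ← Real.rpow_natCast (a ^ (((k:ℝ)-1)/k)) k,
      ← Real.rpow_natCast (b ^ ((1:ℝ)/k)) k, ← Real.rpow_mul ha, ← Real.rpow_mul hb]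
    rw [div_mul_cancel₀ _ hk0.ne', one_div, inv_mul_cancel₀ hk0.ne']
    rw [Real.rpow_one]
    congr 1
    rw [← Real.rpow_natCast a (k-1)]
    congr 1
    push_cast [hk]
    ring
  have hmono : (a ^ (((k:ℝ) - 1) / k) * b ^ ((1:ℝ) / k)) ^ (k:ℕ)
      ≤ (((k:ℝ) - 1) / k * a + 1 / k * b) ^ (k:ℕ) := by
    apply pow_le_pow_left₀ (by positivity) H
  rw [hL] at hmono
  have key : (((k:ℝ) - 1) / k * a + 1 / k * b) ^ (k:ℕ)
      = (((k:ℝ) - 1) * a + b) ^ k / (k:ℝ) ^ k := by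
    rw [← div_pow]
    congr 1
    field_simp
  rw [key] at hmono
  calc a ^ (k-1) * b * (k:ℝ)^k ≤ (((k:ℝ)-1)*a+b)^k / (k:ℝ)^k * (k:ℝ)^k := by
        apply mul_le_mul_of_nonneg_right hmono (by positivity)
    _ = (((k:ℝ)-1)*a+b)^k := by field_simp

lemma mac_step (b k : ℕ) (u t : ℝ) (hu : 0 ≤ u) (ht : 0 ≤ t) :
    (b.choose (k+1) : ℝ) * u^(k+1) + t * (b.choose k : ℝ) * u^k
      ≤ ((b+1).choose (k+1) : ℝ) * (((b:ℝ)*u + t)/((b:ℝ)+1))^(k+1) := by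
  rcases lt_or_ge b k with hbk | hkb
  · have h1 : b.choose (k+1) = 0 := Nat.choose_eq_zero_of_lt (by omega)
    have h2 : b.choose k = 0 := Nat.choose_eq_zero_of_lt hbk
    rw [h1, h2]
    push_cast
    simp only [zero_mul, mul_zero, add_zero, zero_add]
    positivity
  · have hb1 : (0:ℝ) < (b:ℝ)+1 := by positivity
    have hC : ((b+1).choose (k+1) : ℝ) = (b.choose k : ℝ) + (b.choose (k+1):ℝ) := by
      exact_mod_cast congrArg (Nat.cast : ℕ → ℝ) (Nat.choose_succ_succ b k)
    have r1 : ((b:ℝ)+1) * (b.choose k : ℝ) = ((b+1).choose (k+1):ℝ) * ((k:ℝ)+1) := by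
      exact_mod_cast congrArg (Nat.cast : ℕ → ℝ) (Nat.add_one_mul_choose_eq b k)
    have hkb' : (k:ℝ) ≤ (b:ℝ) := by exact_mod_cast hkb
    have r2 : ((b:ℝ)+1) * (b.choose (k+1) : ℝ) = ((b+1).choose (k+1):ℝ) * ((b:ℝ)-(k:ℝ)) := by
      calc ((b:ℝ)+1) * (b.choose (k+1) : ℝ)
          = ((b:ℝ)+1) * (((b+1).choose (k+1):ℝ) - (b.choose k:ℝ)) := by rw [hC]; ring
        _ = ((b:ℝ)+1)*((b+1).choose (k+1):ℝ) - (((b:ℝ)+1) * (b.choose k : ℝ)) := by ring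
        _ = ((b:ℝ)+1)*((b+1).choose (k+1):ℝ) - ((b+1).choose (k+1):ℝ) * ((k:ℝ)+1) := by rw [r1]
        _ = ((b+1).choose (k+1):ℝ) * ((b:ℝ)-(k:ℝ)) := by ring
    have amg := amgm_pow (((b:ℝ)+1)*u) (((b:ℝ)-(k:ℝ))*u + ((k:ℝ)+1)*t)
      (by positivity) (by nlinarith) (k+1) (by omega)
    simp only [Nat.add_sub_cancel] at amg
    push_cast at amg
    have hin : ((((k:ℝ)+1) - 1) * (((b:ℝ)+1)*u) + (((b:ℝ)-(k:ℝ))*u + ((k:ℝ)+1)*t))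
        = ((k:ℝ)+1) * ((b:ℝ)*u + t) := by ring
    rw [hin, mul_pow ((k:ℝ)+1)] at amg
    have hkp : (0:ℝ) < ((k:ℝ)+1)^(k+1) := by positivity
    have key : (((b:ℝ)+1)*u)^k * (((b:ℝ)-(k:ℝ))*u + ((k:ℝ)+1)*t) ≤ ((b:ℝ)*u + t)^(k+1) := by
      have := amg
      nlinarith [this]
    have key2 : u^k * (((b:ℝ)-(k:ℝ))*u + ((k:ℝ)+1)*t) * ((b:ℝ)+1)^k ≤ ((b:ℝ)*u + t)^(k+1) := by
      calc u^k * (((b:ℝ)-(k:ℝ))*u + ((k:ℝ)+1)*t) * ((b:ℝ)+1)^k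
          = (((b:ℝ)+1)*u)^k * (((b:ℝ)-(k:ℝ))*u + ((k:ℝ)+1)*t) := by rw [mul_pow]; ring
        _ ≤ _ := key
    have hCpos : (0:ℝ) ≤ ((b+1).choose (k+1):ℝ) := by positivity
    rw [div_pow, ← mul_div_assoc, le_div_iff₀ (by positivity : (0:ℝ) < ((b:ℝ)+1)^(k+1))]
    calc ((b.choose (k+1) : ℝ) * u^(k+1) + t * (b.choose k : ℝ) * u^k) * ((b:ℝ)+1)^(k+1)
        = ((((b:ℝ)+1) * (b.choose (k+1):ℝ)) * u^(k+1)
            + t * (((b:ℝ)+1) * (b.choose k:ℝ)) * u^k) * ((b:ℝ)+1)^k := by ring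
      _ = (((b+1).choose (k+1):ℝ) * ((b:ℝ)-(k:ℝ)) * u^(k+1)
            + t * (((b+1).choose (k+1):ℝ) * ((k:ℝ)+1)) * u^k) * ((b:ℝ)+1)^k := by rw [r1, r2]
      _ = ((b+1).choose (k+1):ℝ) * (u^k * (((b:ℝ)-(k:ℝ))*u + ((k:ℝ)+1)*t) * ((b:ℝ)+1)^k) := by
          ring
      _ ≤ ((b+1).choose (k+1):ℝ) * ((b:ℝ)*u + t)^(k+1) :=
          mul_le_mul_of_nonneg_left key2 hCpos

lemma maclaurin {ι : Type*} [DecidableEq ι] (A : Finset ι) (x : ι → ℝ) :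
    ∀ (k : ℕ), (∀ i ∈ A, 0 ≤ x i) →
    ∑ S ∈ A.powersetCard k, ∏ i ∈ S, x i
      ≤ (A.card.choose k : ℝ) * ((∑ i ∈ A, x i) / (A.card : ℝ))^k := by
  induction A using Finset.cons_induction with
  | empty =>
    intro k _
    cases k with
    | zero => simp
    | succ k =>
      rw [show (Finset.powersetCard (k+1) (∅ : Finset ι)) = ∅ from
        Finset.powersetCard_eq_empty.2 (by simp)]
      simp
  | cons a B ha IH =>
    intro k hx
    have hxa : 0 ≤ x a := hx a (Finset.mem_cons_self a B)
    have hxB : ∀ i ∈ B, 0 ≤ x i := fun i hi => hx i (Finset.mem_cons.2 (Or.inr hi))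
    cases k with
    | zero => simp
    | succ k =>
      have hsB : 0 ≤ ∑ i ∈ B, x i := Finset.sum_nonneg hxB
      set b := B.card with hb
      set u : ℝ := (∑ i ∈ B, x i) / (b : ℝ) with hudef
      have hu : 0 ≤ u := by positivity
      have hbu : (b:ℝ) * u = ∑ i ∈ B, x i := by
        rcases Nat.eq_zero_or_pos b with h0 | hpos
        · have : B = ∅ := Finset.card_eq_zero.mp h0
          simp [hudef, this, h0]
        · rw [hudef]
          field_simp
      rw [Finset.cons_eq_insert, Finset.powersetCard_succ_insert ha]
      have hdisj : Disjoint (B.powersetCard (k+1)) ((B.powersetCard k).image (insert a)) := by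
        rw [Finset.disjoint_left]
        intro S hS hS'
        obtain ⟨T, hT, rfl⟩ := Finset.mem_image.1 hS'
        have hsub := Finset.mem_powersetCard.1 hS |>.1
        exact ha (hsub (Finset.mem_insert_self a T))
      rw [Finset.sum_union hdisj]
      have hinj : ∀ S ∈ B.powersetCard k, ∀ T ∈ B.powersetCard k,
          insert a S = insert a T → S = T := by
        intro S hS T hT h
        have haS : a ∉ S := fun h' => ha ((Finset.mem_powersetCard.1 hS).1 h')
        have haT : a ∉ T := fun h' => ha ((Finset.mem_powersetCard.1 hT).1 h')
        rw [← Finset.erase_insert haS, ← Finset.erase_insert haT, h]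
      rw [Finset.sum_image hinj]
      have himg : ∀ S ∈ B.powersetCard k, ∏ i ∈ insert a S, x i = x a * ∏ i ∈ S, x i := by
        intro S hS
        exact Finset.prod_insert (fun h' => ha ((Finset.mem_powersetCard.1 hS).1 h'))
      rw [Finset.sum_congr rfl himg, ← Finset.mul_sum]
      have h1 := IH (k+1) hxB
      have h2 := IH k hxB
      have h2' : x a * ∑ S ∈ B.powersetCard k, ∏ i ∈ S, x i
          ≤ x a * ((b.choose k : ℝ) * u^k) := mul_le_mul_of_nonneg_left h2 hxa
      have step := mac_step b k u (x a) hu hxa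
      have hcard : (insert a B).card = b + 1 := Finset.card_insert_of_notMem ha
      have hsum : ∑ i ∈ insert a B, x i = x a + ∑ i ∈ B, x i := Finset.sum_insert ha
      rw [hcard, hsum]
      calc (∑ S ∈ B.powersetCard (k+1), ∏ i ∈ S, x i)
            + x a * ∑ S ∈ B.powersetCard k, ∏ i ∈ S, x i
          ≤ (b.choose (k+1) : ℝ) * u^(k+1) + x a * ((b.choose k : ℝ) * u^k) := by
            exact add_le_add h1 h2'
        _ = (b.choose (k+1) : ℝ) * u^(k+1) + x a * (b.choose k : ℝ) * u^k := by ring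
        _ ≤ ((b+1).choose (k+1) : ℝ) * (((b:ℝ)*u + x a)/((b:ℝ)+1))^(k+1) := step
        _ = ((b+1).choose (k+1) : ℝ) * ((x a + ∑ i ∈ B, x i)/((b+1 : ℕ):ℝ))^(k+1) := by
            rw [hbu]
            push_cast
            ring_nf

lemma sum_inj_le (k r : ℕ) (d : Fin r → ℝ) (hd : ∀ j, 0 ≤ d j) :
    ∑ h ∈ (Finset.univ : Finset (Fin k → Fin r)).filter (fun h => Function.Injective h),
      ∏ i, d (h i)
    ≤ (k.factorial : ℝ) *
      ∑ S ∈ (Finset.univ : Finset (Fin r)).powersetCard k, ∏ j ∈ S, d j := by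
  classical
  set I := (Finset.univ : Finset (Fin k → Fin r)).filter (fun h => Function.Injective h) with hI
  have hmaps : ∀ h ∈ I, Finset.image h Finset.univ ∈
      (Finset.univ : Finset (Fin r)).powersetCard k := by
    intro h hh
    have hinj : Function.Injective h := (Finset.mem_filter.1 hh).2
    rw [Finset.mem_powersetCard_univ, Finset.card_image_of_injective _ hinj,
      Finset.card_univ, Fintype.card_fin]
  rw [← Finset.sum_fiberwise_of_maps_to hmaps (fun h => ∏ i, d (h i)), Finset.mul_sum]
  apply Finset.sum_le_sum
  intro S hS
  have hScard : S.card = k := (Finset.mem_powersetCard_univ.1 hS)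
  have hterm : ∀ h ∈ I.filter (fun h => Finset.image h Finset.univ = S),
      ∏ i, d (h i) = ∏ j ∈ S, d j := by
    intro h hh
    have hinj : Function.Injective h := (Finset.mem_filter.1 (Finset.mem_filter.1 hh).1).2
    have himg : Finset.image h Finset.univ = S := (Finset.mem_filter.1 hh).2
    rw [← himg, Finset.prod_image (fun a _ b _ hab => hinj hab)]
  rw [Finset.sum_congr rfl hterm, Finset.sum_const, nsmul_eq_mul]
  have hprod : 0 ≤ ∏ j ∈ S, d j := Finset.prod_nonneg fun j _ => hd j
  apply mul_le_mul_of_nonneg_right _ hprod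
  have hcard : (I.filter (fun h => Finset.image h Finset.univ = S)).card ≤ k.factorial := by
    have hsub : I.filter (fun h => Finset.image h Finset.univ = S) ⊆
        Finset.univ.filter (fun g : Fin k → Fin r =>
          Function.Injective g ∧ ∀ i, g i ∈ S) := by
      intro h hh
      have hinj : Function.Injective h := (Finset.mem_filter.1 (Finset.mem_filter.1 hh).1).2
      have himg : Finset.image h Finset.univ = S := (Finset.mem_filter.1 hh).2
      refine Finset.mem_filter.2 ⟨Finset.mem_univ _, hinj, fun i => ?_⟩
      rw [← himg]
      exact Finset.mem_image_of_mem h (Finset.mem_univ i)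
    refine (Finset.card_le_card hsub).trans ?_
    have e : {g : Fin k → Fin r // Function.Injective g ∧ ∀ i, g i ∈ S}
        ≃ (Fin k ↪ {x // x ∈ S}) :=
      { toFun := fun g => ⟨fun i => ⟨g.1 i, g.2.2 i⟩,
          fun i j hij => g.2.1 (congrArg Subtype.val hij)⟩
        invFun := fun e => ⟨fun i => (e i : Fin r),
          fun i j hij => e.injective (Subtype.ext hij), fun i => (e i).2⟩
        left_inv := fun g => rfl
        right_inv := fun e => rfl }
    rw [← Fintype.card_subtype, Fintype.card_congr e, Fintype.card_embedding_eq,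
      Fintype.card_fin, Fintype.card_coe, hScard, Nat.descFactorial_self]
  exact_mod_cast hcard


lemma isRainbow_star_iff {k n r : ℕ} (c : Sym2 (Fin n) → Fin r) (f : Fin (k+2) ↪ Fin n) :
    IsRainbow (starG (k+2)) c f ↔
      Function.Injective (fun i : Fin (k+1) => c s(f 0, f i.succ)) := by
  have hmem : ∀ i : Fin (k+1), s((0 : Fin (k+2)), i.succ) ∈ (starG (k+2)).edgeSet := by
    intro i
    rw [SimpleGraph.mem_edgeSet]
    exact ⟨Or.inl rfl, (Fin.succ_ne_zero i).symm⟩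
  have edge_char : ∀ e ∈ (starG (k+2)).edgeSet, ∃ i : Fin (k+1), e = s((0:Fin (k+2)), i.succ) := by
    intro e
    induction e using Sym2.ind with
    | _ a b =>
      intro he
      rw [SimpleGraph.mem_edgeSet] at he
      obtain ⟨h0, hab⟩ := he
      rcases h0 with h0 | h0
      · have ha : a = 0 := Fin.ext h0
        subst ha
        have hb : b ≠ 0 := fun h => hab h.symm
        exact ⟨b.pred hb, by rw [Fin.succ_pred]⟩
      · have hb : b = 0 := Fin.ext h0
        subst hb
        have ha : a ≠ 0 := hab
        exact ⟨a.pred ha, by rw [Fin.succ_pred, Sym2.eq_swap]⟩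
  constructor
  · intro hrb i j hij
    by_contra hne
    have hedge : s((0:Fin (k+2)), i.succ) ≠ s((0:Fin (k+2)), j.succ) := by
      intro h
      rw [Sym2.eq_iff] at h
      rcases h with ⟨-, h2⟩ | ⟨h1, -⟩
      · exact hne (Fin.succ_injective _ h2)
      · exact Fin.succ_ne_zero j h1.symm
    exact hrb _ (hmem i) _ (hmem j) hedge (by simpa [Sym2.map_pair_eq] using hij)
  · intro hinj e₁ he₁ e₂ he₂ hne
    obtain ⟨i, rfl⟩ := edge_char e₁ he₁
    obtain ⟨j, rfl⟩ := edge_char e₂ he₂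
    have hij : i ≠ j := fun h => hne (by rw [h])
    simpa [Sym2.map_pair_eq] using fun hc => hij (hinj hc)


lemma count_eq (k n r : ℕ) (c : Sym2 (Fin n) → Fin r) :
    rainbowCount (starG (k+2)) c =
      ∑ v : Fin n, ∑ h ∈ (Finset.univ : Finset (Fin (k+1) → Fin r)).filter
          (fun h => Function.Injective h),
        ∏ i : Fin (k+1),
          (Finset.univ.filter (fun u : Fin n => u ≠ v ∧ c s(v, u) = h i)).card := by
  classical
  -- Step 1: pass to plain functions
  have e1 : {f : Fin (k+2) ↪ Fin n // IsRainbow (starG (k+2)) c f} ≃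
      {g : Fin (k+2) → Fin n // Function.Injective g ∧
        Function.Injective (fun i : Fin (k+1) => c s(g 0, g i.succ))} :=
    { toFun := fun f => ⟨⇑f.1, f.1.injective, (isRainbow_star_iff c f.1).1 f.2⟩
      invFun := fun g => ⟨⟨g.1, g.2.1⟩, (isRainbow_star_iff c ⟨g.1, g.2.1⟩).2 g.2.2⟩
      left_inv := fun f => rfl
      right_inv := fun g => rfl }
  rw [rainbowCount, Nat.card_congr e1, Nat.card_eq_fintype_card, Fintype.card_subtype]
  -- Step 2: split by the center vertex
  set G : Fin n → Finset (Fin (k+1) → Fin n) := fun v =>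
    Finset.univ.filter (fun g => (∀ i, g i ≠ v) ∧
      Function.Injective (fun i => c s(v, g i))) with hG
  have hsplit : (Finset.univ.filter (fun g : Fin (k+2) → Fin n =>
      Function.Injective g ∧
        Function.Injective (fun i : Fin (k+1) => c s(g 0, g i.succ)))).card
      = (Finset.univ.sigma G).card := by
    apply Finset.card_nbij' (fun f => ⟨f 0, fun i => f i.succ⟩)
      (fun p => Fin.cases p.1 p.2)
    · intro f hf
      rw [Finset.mem_coe, Finset.mem_filter] at hf
      rw [Finset.mem_coe]
      obtain ⟨-, hinj, hcol⟩ := hf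
      refine Finset.mem_sigma.2 ⟨Finset.mem_univ _, ?_⟩
      rw [hG]
      refine Finset.mem_filter.2 ⟨Finset.mem_univ _, fun i h => ?_, hcol⟩
      exact Fin.succ_ne_zero i (hinj h)
    · rintro ⟨v, g⟩ hp
      rw [Finset.mem_coe, Finset.mem_sigma, hG, Finset.mem_filter] at hp
      rw [Finset.mem_coe]
      obtain ⟨-, -, hne, hcol⟩ := hp
      dsimp only at hne hcol
      have hginj : Function.Injective g := by
        intro i j hij
        exact hcol (show c s(v, g i) = c s(v, g j) by rw [hij])
      refine Finset.mem_filter.2 ⟨Finset.mem_univ _, ?_, ?_⟩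
      · intro x y hxy
        induction x using Fin.cases with
        | zero =>
          induction y using Fin.cases with
          | zero => rfl
          | succ j =>
            simp only [Fin.cases_zero, Fin.cases_succ] at hxy
            exact absurd hxy.symm (hne j)
        | succ i =>
          induction y using Fin.cases with
          | zero =>
            simp only [Fin.cases_zero, Fin.cases_succ] at hxy
            exact absurd hxy (hne i)
          | succ j =>
            simp only [Fin.cases_succ] at hxy
            rw [hginj hxy]
      · simpa only [Fin.cases_zero, Fin.cases_succ] using hcol
    · intro f hf
      funext x
      induction x using Fin.cases with
      | zero => simp only [Fin.cases_zero]
      | succ i => simp only [Fin.cases_succ]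
    · rintro ⟨v, g⟩ hp
      simp only [Fin.cases_zero, Fin.cases_succ]
  rw [hsplit, Finset.card_sigma]
  -- Step 3: fiberwise over the color pattern
  apply Finset.sum_congr rfl
  intro v _
  have hmaps : ∀ g ∈ G v, (fun i => c s(v, g i)) ∈
      (Finset.univ : Finset (Fin (k+1) → Fin r)).filter (fun h => Function.Injective h) := by
    intro g hg
    rw [hG, Finset.mem_filter] at hg
    exact Finset.mem_filter.2 ⟨Finset.mem_univ _, hg.2.2⟩
  rw [Finset.card_eq_sum_card_fiberwise hmaps]
  apply Finset.sum_congr rfl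
  intro h hh
  have hhinj : Function.Injective h := (Finset.mem_filter.1 hh).2
  have hfib : (G v).filter (fun g => (fun i => c s(v, g i)) = h)
      = Fintype.piFinset (fun i => Finset.univ.filter (fun u : Fin n => u ≠ v ∧ c s(v, u) = h i)) := by
    ext g
    rw [Finset.mem_filter, hG, Finset.mem_filter, Fintype.mem_piFinset]
    constructor
    · rintro ⟨⟨-, hne, -⟩, hcol⟩ i
      exact Finset.mem_filter.2 ⟨Finset.mem_univ _, hne i, congrFun hcol i⟩
    · intro hmem
      have h1 : ∀ i, g i ≠ v := fun i => ((Finset.mem_filter.1 (hmem i)).2).1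
      have h2 : ∀ i, c s(v, g i) = h i := fun i => ((Finset.mem_filter.1 (hmem i)).2).2
      refine ⟨⟨Finset.mem_univ _, h1, ?_⟩, funext h2⟩
      intro i j hij
      apply hhinj
      have hij' : c s(v, g i) = c s(v, g j) := hij
      rw [← h2 i, ← h2 j]
      exact hij'
  rw [hfib, Fintype.card_piFinset]

def modColor (n r : ℕ) (hr : 0 < r) : Sym2 (Fin n) → Fin r :=
  Sym2.lift ⟨fun u w => ⟨(u.val + w.val) % r, Nat.mod_lt _ hr⟩, fun u w => by
    simp [Nat.add_comm]⟩

lemma modColor_fiber {n r : ℕ} (hr : 0 < r) (hn : 4 * r ≤ n) (v : Fin n) (j : Fin r) :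
    n / r - 3 ≤
      (Finset.univ.filter (fun u : Fin n => u ≠ v ∧ modColor n r hr s(v, u) = j)).card := by
  classical
  set t := n / r - 2 with ht
  set a := j.val + r - v.val % r with ha
  have hwlt : v.val % r < r := Nat.mod_lt _ hr
  have hdr : n / r * r ≤ n := Nat.div_mul_le_self n r
  have h4 : 4 ≤ n / r := (Nat.le_div_iff_mul_le hr).2 (by omega)
  have hbound : ∀ q : Fin t, a + q.val * r < n := by
    intro q
    have hq : q.val < t := q.isLt
    have hmul : (q.val + 3) * r ≤ n / r * r := Nat.mul_le_mul_right r (by omega)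
    have hexp : (q.val + 3) * r = q.val * r + 3 * r := by ring
    omega
  set φ : Fin t → Fin n := fun q => ⟨a + q.val * r, hbound q⟩ with hφ
  have hφinj : Function.Injective φ := by
    intro q1 q2 h
    have h' : a + q1.val * r = a + q2.val * r := congrArg Fin.val h
    have : q1.val * r = q2.val * r := by omega
    exact Fin.ext (Nat.eq_of_mul_eq_mul_right hr this)
  have hsub : (Finset.image φ Finset.univ).erase v ⊆
      Finset.univ.filter (fun u : Fin n => u ≠ v ∧ modColor n r hr s(v, u) = j) := by
    intro u hu
    obtain ⟨hne, hQ⟩ := Finset.mem_erase.1 hu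
    obtain ⟨q, -, rfl⟩ := Finset.mem_image.1 hQ
    refine Finset.mem_filter.2 ⟨Finset.mem_univ _, hne, ?_⟩
    apply Fin.ext
    show (v.val + (a + q.val * r)) % r = j.val
    have h3 : v.val / r * r + v.val % r = v.val := Nat.div_add_mod' v.val r
    have key : v.val + (a + q.val * r) = j.val + (v.val / r + 1 + q.val) * r := by
      have hexp : (v.val / r + 1 + q.val) * r = v.val / r * r + r + q.val * r := by ring
      omega
    rw [key, Nat.add_mul_mod_self_right, Nat.mod_eq_of_lt j.isLt]
  have hcard : t - 1 ≤ ((Finset.image φ Finset.univ).erase v).card := by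
    have himg : (Finset.image φ Finset.univ).card = t := by
      rw [Finset.card_image_of_injective _ hφinj, Finset.card_univ, Fintype.card_fin]
    have := Finset.pred_card_le_card_erase (s := Finset.image φ Finset.univ) (a := v)
    omega
  have := Finset.card_le_card hsub
  omega

lemma sum_d {n r : ℕ} (c : Sym2 (Fin n) → Fin r) (v : Fin n) :
    ∑ j : Fin r,
      (Finset.univ.filter (fun u : Fin n => u ≠ v ∧ c s(v, u) = j)).card = n - 1 := by
  classical
  have hmaps : ∀ u ∈ Finset.univ.filter (fun u : Fin n => u ≠ v),
      c s(v, u) ∈ (Finset.univ : Finset (Fin r)) := fun u _ => Finset.mem_univ _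
  have h := Finset.card_eq_sum_card_fiberwise hmaps
  have hfilter : ∀ j : Fin r,
      (Finset.univ.filter (fun u : Fin n => u ≠ v)).filter (fun u => c s(v, u) = j)
        = Finset.univ.filter (fun u : Fin n => u ≠ v ∧ c s(v, u) = j) := by
    intro j
    rw [Finset.filter_filter]
  rw [Finset.sum_congr rfl (fun j _ => congrArg Finset.card (hfilter j))] at h
  rw [← h, Finset.filter_ne', Finset.card_erase_of_mem (Finset.mem_univ v),
    Finset.card_univ, Fintype.card_fin]

lemma card_I (k r : ℕ) :
    ((Finset.univ : Finset (Fin (k+1) → Fin r)).filter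
      (fun h => Function.Injective h)).card = (k+1).factorial * r.choose (k+1) := by
  classical
  rw [← Fintype.card_subtype, Fintype.card_congr (Equiv.subtypeInjectiveEquivEmbedding _ _),
    Fintype.card_embedding_eq, Fintype.card_fin, Fintype.card_fin,
    Nat.descFactorial_eq_factorial_mul_choose]

lemma upper_bound (k n r : ℕ) (c : Sym2 (Fin n) → Fin r) :
    (rainbowCount (starG (k+2)) c : ℝ) ≤
      (n : ℝ) * (k+1).factorial * r.choose (k+1) * (((n - 1 : ℕ) : ℝ) / r) ^ (k+1) := by
  classical
  rw [count_eq]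
  push_cast
  have hterm : ∀ v : Fin n,
      ∑ h ∈ (Finset.univ : Finset (Fin (k+1) → Fin r)).filter (fun h => Function.Injective h),
        ∏ i : Fin (k+1),
          ((Finset.univ.filter (fun u : Fin n => u ≠ v ∧ c s(v, u) = h i)).card : ℝ)
      ≤ ((k+1).factorial : ℝ) * r.choose (k+1) * (((n - 1 : ℕ) : ℝ) / r) ^ (k+1) := by
    intro v
    set d : Fin r → ℝ := fun j =>
      ((Finset.univ.filter (fun u : Fin n => u ≠ v ∧ c s(v, u) = j)).card : ℝ) with hd
    have hdnn : ∀ j, 0 ≤ d j := fun j => Nat.cast_nonneg _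
    calc ∑ h ∈ (Finset.univ : Finset (Fin (k+1) → Fin r)).filter
            (fun h => Function.Injective h), ∏ i : Fin (k+1), d (h i)
        ≤ ((k+1).factorial : ℝ) *
            ∑ S ∈ (Finset.univ : Finset (Fin r)).powersetCard (k+1), ∏ j ∈ S, d j :=
          sum_inj_le (k+1) r d hdnn
      _ ≤ ((k+1).factorial : ℝ) * (((Finset.univ : Finset (Fin r)).card.choose (k+1) : ℝ) *
            ((∑ j : Fin r, d j) / ((Finset.univ : Finset (Fin r)).card : ℝ)) ^ (k+1)) := by
          apply mul_le_mul_of_nonneg_left _ (by positivity)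
          exact maclaurin Finset.univ d (k+1) (fun j _ => hdnn j)
      _ = ((k+1).factorial : ℝ) * r.choose (k+1) * (((n - 1 : ℕ) : ℝ) / r) ^ (k+1) := by
          have hsum : ∑ j : Fin r, d j = ((n - 1 : ℕ) : ℝ) := by
            rw [hd, ← Nat.cast_sum]
            exact_mod_cast congrArg (Nat.cast : ℕ → ℝ) (sum_d c v)
          rw [hsum, Finset.card_univ, Fintype.card_fin]
          ring
  calc ∑ v : Fin n, ∑ h ∈ (Finset.univ : Finset (Fin (k+1) → Fin r)).filter
          (fun h => Function.Injective h),
        ∏ i : Fin (k+1),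
          ((Finset.univ.filter (fun u : Fin n => u ≠ v ∧ c s(v, u) = h i)).card : ℝ)
      ≤ ∑ _v : Fin n, ((k+1).factorial : ℝ) * r.choose (k+1) * (((n - 1 : ℕ) : ℝ) / r) ^ (k+1) :=
        Finset.sum_le_sum (fun v _ => hterm v)
    _ = (n : ℝ) * (k+1).factorial * r.choose (k+1) * (((n - 1 : ℕ) : ℝ) / r) ^ (k+1) := by
        rw [Finset.sum_const, Finset.card_univ, Fintype.card_fin, nsmul_eq_mul]
        ring

lemma lower_bound (k n r : ℕ) (hr : 0 < r) (hn : 4 * r ≤ n) :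
    ∃ c : Sym2 (Fin n) → Fin r,
      (n : ℝ) * (k+1).factorial * r.choose (k+1) * (((n / r - 3 : ℕ) : ℝ)) ^ (k+1)
        ≤ (rainbowCount (starG (k+2)) c : ℝ) := by
  classical
  refine ⟨modColor n r hr, ?_⟩
  rw [count_eq]
  push_cast
  have hterm : ∀ v : Fin n,
      ((k+1).factorial : ℝ) * r.choose (k+1) * (((n / r - 3 : ℕ) : ℝ)) ^ (k+1)
      ≤ ∑ h ∈ (Finset.univ : Finset (Fin (k+1) → Fin r)).filter (fun h => Function.Injective h),
        ∏ i : Fin (k+1),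
          ((Finset.univ.filter
            (fun u : Fin n => u ≠ v ∧ modColor n r hr s(v, u) = h i)).card : ℝ) := by
    intro v
    have hprod : ∀ h ∈ (Finset.univ : Finset (Fin (k+1) → Fin r)).filter
        (fun h => Function.Injective h),
        (((n / r - 3 : ℕ) : ℝ)) ^ (k+1) ≤ ∏ i : Fin (k+1),
          ((Finset.univ.filter
            (fun u : Fin n => u ≠ v ∧ modColor n r hr s(v, u) = h i)).card : ℝ) := by
      intro h _
      have hconst : ∏ _i : Fin (k+1), (((n / r - 3 : ℕ) : ℝ)) = (((n / r - 3 : ℕ) : ℝ)) ^ (k+1) := by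
        simp [Finset.prod_const]
      rw [← hconst]
      apply Finset.prod_le_prod (fun i _ => Nat.cast_nonneg _)
      intro i _
      exact_mod_cast modColor_fiber hr hn v (h i)
    calc ((k+1).factorial : ℝ) * r.choose (k+1) * (((n / r - 3 : ℕ) : ℝ)) ^ (k+1)
        = ∑ _h ∈ (Finset.univ : Finset (Fin (k+1) → Fin r)).filter
            (fun h => Function.Injective h), (((n / r - 3 : ℕ) : ℝ)) ^ (k+1) := by
          rw [Finset.sum_const, card_I, nsmul_eq_mul]
          push_cast
          ring
      _ ≤ _ := Finset.sum_le_sum hprod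
  calc (n : ℝ) * (k+1).factorial * r.choose (k+1) * (((n / r - 3 : ℕ) : ℝ)) ^ (k+1)
      = ∑ _v : Fin n, ((k+1).factorial : ℝ) * r.choose (k+1) * (((n / r - 3 : ℕ) : ℝ)) ^ (k+1) := by
        rw [Finset.sum_const, Finset.card_univ, Fintype.card_fin, nsmul_eq_mul]
        ring
    _ ≤ _ := Finset.sum_le_sum (fun v _ => hterm v)

lemma tendsto_ratio (a b : ℝ) :
    Tendsto (fun n : ℕ => ((n:ℝ) - a)/((n:ℝ) - b)) atTop (𝓝 1) := by
  have h1 : Tendsto (fun n : ℕ => (n:ℝ) - b) atTop atTop := by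
    apply tendsto_atTop_add_const_right atTop (-b) tendsto_natCast_atTop_atTop |>.congr
    intro n
    ring
  have h2 : Tendsto (fun n : ℕ => (b - a)/((n:ℝ) - b)) atTop (𝓝 0) :=
    Tendsto.div_atTop tendsto_const_nhds h1
  have h3 : Tendsto (fun n : ℕ => 1 + (b-a)/((n:ℝ)-b)) atTop (𝓝 (1 + 0)) :=
    tendsto_const_nhds.add h2
  rw [add_zero] at h3
  apply h3.congr'
  have hev : ∀ᶠ n : ℕ in atTop, (b + 1 : ℝ) ≤ n :=
    tendsto_natCast_atTop_atTop.eventually_ge_atTop (b+1)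
  filter_upwards [hev] with n hn
  have hnb : (n:ℝ) - b ≠ 0 := by linarith
  field_simp
  ring

lemma tendsto_main (a : ℝ) (K : ℕ) :
    Tendsto (fun n : ℕ => (n:ℝ) * ((n:ℝ) - a)^(K+1) / ∏ i ∈ Finset.range (K+2), ((n:ℝ) - i))
      atTop (𝓝 1) := by
  have hprod : Tendsto (fun n : ℕ => ∏ i ∈ Finset.range (K+1), (((n:ℝ) - a)/((n:ℝ) - (i+1))))
      atTop (𝓝 1) := by
    have := tendsto_finset_prod (Finset.range (K+1))
      (fun i _ => tendsto_ratio a ((i : ℝ)+1) :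
        ∀ i ∈ Finset.range (K+1), Tendsto (fun n : ℕ => ((n:ℝ) - a)/((n:ℝ) - ((i:ℝ)+1)))
          atTop (𝓝 1))
    simpa using this
  apply hprod.congr'
  have hev : ∀ᶠ n : ℕ in atTop, (K + 3 : ℝ) ≤ n :=
    tendsto_natCast_atTop_atTop.eventually_ge_atTop _
  filter_upwards [hev] with n hn
  have hne : ∀ i ∈ Finset.range (K+1), ((n:ℝ) - ((i:ℝ)+1)) ≠ 0 := by
    intro i hi
    have h1 : (i:ℝ) ≤ (K:ℝ) := by exact_mod_cast Nat.lt_succ_iff.1 (Finset.mem_range.1 hi)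
    have h2 : (K:ℝ) + 3 ≤ (n:ℝ) := hn
    intro hzero
    linarith
  have hD : ∏ i ∈ Finset.range (K+2), ((n:ℝ) - i)
      = (n:ℝ) * ∏ i ∈ Finset.range (K+1), ((n:ℝ) - ((i:ℝ)+1)) := by
    rw [Finset.prod_range_succ']
    push_cast
    ring
  rw [Finset.prod_div_distrib, Finset.prod_const, Finset.card_range, hD]
  have hn0 : (n:ℝ) ≠ 0 := by linarith
  have hDne : ∏ i ∈ Finset.range (K+1), ((n:ℝ) - ((i:ℝ)+1)) ≠ 0 :=
    Finset.prod_ne_zero_iff.2 hne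
  field_simp


lemma desc_cast (n K : ℕ) (h : K ≤ n) :
    ((n.descFactorial K : ℕ) : ℝ) = ∏ i ∈ Finset.range K, ((n:ℝ) - i) := by
  rw [Nat.descFactorial_eq_prod_range, Nat.cast_prod]
  apply Finset.prod_congr rfl
  intro i hi
  have : i ≤ n := le_trans (Nat.le_of_lt (Finset.mem_range.1 hi)) h
  exact Nat.cast_sub this

lemma rbL_bddAbove (k n r : ℕ) :
    BddAbove (Set.range fun c : Sym2 (Fin n) → Fin r =>
      rainbowCount (starG (k+2)) c) := by
  refine ⟨Nat.card (Fin (k+2) ↪ Fin n), ?_⟩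
  rintro x ⟨c, rfl⟩
  exact Finite.card_subtype_le _

lemma rbL_le (k n r : ℕ) (hr : 0 < r) :
    (rbL (starG (k+2)) n r : ℝ) ≤
      (n : ℝ) * (k+1).factorial * r.choose (k+1) * (((n - 1 : ℕ) : ℝ) / r) ^ (k+1) := by
  have hne : (Set.range fun c : Sym2 (Fin n) → Fin r =>
      rainbowCount (starG (k+2)) c).Nonempty :=
    ⟨_, ⟨fun _ => (⟨0, hr⟩ : Fin r), rfl⟩⟩
  obtain ⟨c, hc⟩ := Nat.sSup_mem hne (rbL_bddAbove k n r)
  rw [rbL, ← hc]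
  exact upper_bound k n r c

lemma rbL_ge (k n r : ℕ) (c : Sym2 (Fin n) → Fin r) :
    (rainbowCount (starG (k+2)) c : ℝ) ≤ (rbL (starG (k+2)) n r : ℝ) := by
  exact_mod_cast Nat.cast_le.2 (le_csSup (rbL_bddAbove k n r) ⟨c, rfl⟩)


end AuxStmt7

theorem stmt7 (m r : ℕ) (hm : 2 ≤ m) (hr : m - 1 ≤ r) :
    Tendsto (fun n => rbC (starG m) n r) atTop
      (𝓝 ((r.choose (m - 1) * (m - 1).factorial : ℝ) / r ^ (m - 1))) := by
  obtain ⟨k, rfl⟩ : ∃ k, m = k + 2 := ⟨m - 2, by omega⟩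
  have hm1 : k + 2 - 1 = k + 1 := rfl
  rw [hm1]
  have hr1 : 0 < r := by omega
  have hrR : (0:ℝ) < r := by exact_mod_cast hr1
  set T : ℝ := ((r.choose (k+1) : ℝ) * (((k+1).factorial : ℕ) : ℝ)) / (r:ℝ) ^ (k+1) with hT
  have hDpos : ∀ n : ℕ, k + 2 ≤ n → (0:ℝ) < ∏ i ∈ Finset.range (k+2), ((n:ℝ) - i) := by
    intro n hn
    apply Finset.prod_pos
    intro i hi
    have h1 : i < k + 2 := Finset.mem_range.1 hi
    have h2 : (i:ℝ) < (n:ℝ) := by exact_mod_cast lt_of_lt_of_le h1 hn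
    linarith
  have hDeq : ∀ n : ℕ, k + 2 ≤ n →
      ((n.choose (k+2)) : ℝ) * (((k+2).factorial) : ℝ)
        = ∏ i ∈ Finset.range (k+2), ((n:ℝ) - i) := by
    intro n hn
    rw [← desc_cast n (k+2) hn, Nat.descFactorial_eq_factorial_mul_choose]
    push_cast
    ring
  have hrbC : ∀ n : ℕ, k + 2 ≤ n → rbC (starG (k+2)) n r
      = (rbL (starG (k+2)) n r : ℝ) / ∏ i ∈ Finset.range (k+2), ((n:ℝ) - i) := by
    intro n hn
    rw [rbC, ← hDeq n hn]
  -- upper bound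
  have hU : ∀ᶠ n : ℕ in atTop, rbC (starG (k+2)) n r ≤
      T * ((n:ℝ) * ((n:ℝ) - 1)^(k+1) / ∏ i ∈ Finset.range (k+2), ((n:ℝ) - i)) := by
    filter_upwards [eventually_ge_atTop (k+2)] with n hn
    have hn1 : 1 ≤ n := by omega
    have hD := hDpos n hn
    have hnum := rbL_le k n r hr1
    have hcast : ((n - 1 : ℕ) : ℝ) = (n:ℝ) - 1 := by
      rw [Nat.cast_sub hn1, Nat.cast_one]
    rw [hcast] at hnum
    rw [hrbC n hn]
    calc (rbL (starG (k+2)) n r : ℝ) / ∏ i ∈ Finset.range (k+2), ((n:ℝ) - i)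
        ≤ ((n : ℝ) * (k+1).factorial * r.choose (k+1) * (((n:ℝ) - 1) / r) ^ (k+1))
            / ∏ i ∈ Finset.range (k+2), ((n:ℝ) - i) := by
          exact div_le_div_of_nonneg_right hnum hD.le
      _ = T * ((n:ℝ) * ((n:ℝ) - 1)^(k+1) / ∏ i ∈ Finset.range (k+2), ((n:ℝ) - i)) := by
          rw [hT, div_pow]
          ring
  -- lower bound
  have hL : ∀ᶠ n : ℕ in atTop,
      T * ((n:ℝ) * ((n:ℝ) - 4*r)^(k+1) / ∏ i ∈ Finset.range (k+2), ((n:ℝ) - i))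
        ≤ rbC (starG (k+2)) n r := by
    filter_upwards [eventually_ge_atTop (k+2), eventually_ge_atTop (4*r)] with n hn hn4
    have hD := hDpos n hn
    obtain ⟨c, hc⟩ := lower_bound k n r hr1 hn4
    have h4div : 4 ≤ n / r := (Nat.le_div_iff_mul_le hr1).2 (by omega)
    have h3 : 3 ≤ n / r := by omega
    have hmod : n % r < r := Nat.mod_lt _ hr1
    have hdm : r * (n / r) + n % r = n := Nat.div_add_mod n r
    have hnr : (n:ℝ) - r ≤ (r:ℝ) * ((n / r : ℕ) : ℝ) := by
      have : n ≤ r * (n / r) + r := by omega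
      have h' : (n:ℝ) ≤ (r:ℝ) * ((n / r : ℕ) : ℝ) + r := by exact_mod_cast this
      linarith
    have hcast3 : ((n / r - 3 : ℕ) : ℝ) = ((n / r : ℕ) : ℝ) - 3 := Nat.cast_sub h3
    have hfrac : ((n:ℝ) - 4*r)/r ≤ ((n / r - 3 : ℕ) : ℝ) := by
      rw [hcast3, div_le_iff₀ hrR]
      have h4r : (4:ℝ)*r ≥ 4 * 1 := by
        have : (1:ℝ) ≤ r := by exact_mod_cast hr1
        nlinarith
      nlinarith [hnr]
    have hfnn : (0:ℝ) ≤ ((n:ℝ) - 4*r)/r := by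
      apply div_nonneg _ hrR.le
      have : (4*r : ℝ) ≤ (n:ℝ) := by exact_mod_cast hn4
      linarith
    have hpow : (((n:ℝ) - 4*r)/r) ^ (k+1) ≤ (((n / r - 3 : ℕ) : ℝ)) ^ (k+1) :=
      pow_le_pow_left₀ hfnn hfrac (k+1)
    have hnum : (n : ℝ) * (k+1).factorial * r.choose (k+1) * (((n:ℝ) - 4*r)/r) ^ (k+1)
        ≤ (rbL (starG (k+2)) n r : ℝ) := by
      calc (n : ℝ) * (k+1).factorial * r.choose (k+1) * (((n:ℝ) - 4*r)/r) ^ (k+1)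
          ≤ (n : ℝ) * (k+1).factorial * r.choose (k+1) * (((n / r - 3 : ℕ) : ℝ)) ^ (k+1) := by
            apply mul_le_mul_of_nonneg_left hpow (by positivity)
        _ ≤ (rainbowCount (starG (k+2)) c : ℝ) := hc
        _ ≤ _ := rbL_ge k n r c
    rw [hrbC n hn]
    calc T * ((n:ℝ) * ((n:ℝ) - 4*r)^(k+1) / ∏ i ∈ Finset.range (k+2), ((n:ℝ) - i))
        = ((n : ℝ) * (k+1).factorial * r.choose (k+1) * (((n:ℝ) - 4*r)/r) ^ (k+1))
            / ∏ i ∈ Finset.range (k+2), ((n:ℝ) - i) := by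
          rw [hT, div_pow]
          ring
      _ ≤ (rbL (starG (k+2)) n r : ℝ) / ∏ i ∈ Finset.range (k+2), ((n:ℝ) - i) := by
          exact div_le_div_of_nonneg_right hnum hD.le
  -- limits
  have hUt : Tendsto (fun n : ℕ =>
      T * ((n:ℝ) * ((n:ℝ) - 1)^(k+1) / ∏ i ∈ Finset.range (k+2), ((n:ℝ) - i)))
      atTop (𝓝 (T * 1)) := (tendsto_main 1 k).const_mul T
  have hLt : Tendsto (fun n : ℕ =>
      T * ((n:ℝ) * ((n:ℝ) - 4*r)^(k+1) / ∏ i ∈ Finset.range (k+2), ((n:ℝ) - i)))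
      atTop (𝓝 (T * 1)) := (tendsto_main (4*r) k).const_mul T
  rw [mul_one] at hUt hLt
  exact tendsto_of_tendsto_of_tendsto_of_le_of_le' hLt hUt hL hU
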